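/- arXiv:2404.10881 — 4 statements merged into one kernel-verified Lean document; each statement's English description precedes it below -/
import Mathlib

section
/- Let K = {z ∈ ℝ^d : ‖z‖_1 ≤ L√s}, let z̄ ∈ K, let ξ ∈ ℝ^d, set z̃ = z̄ + ξ, and let ẑ be the Euclidean projection of z̃ onto K. Then ‖ẑ − z̄‖_2 ≤ √(2 L ‖ξ‖_∞ √s). -/
open Finset
open scoped RealInnerProductSpace

/-- Projection mechanism error bound: if `z̄` lies in the ℓ₁-ball `K` of radius `L√s`,
`z̃ = z̄ + ξ`, and `ẑ` is the Euclidean projection of `z̃` onto `K`, then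
`‖ẑ − z̄‖₂ ≤ √(2 L ‖ξ‖_∞ √s)`. -/
theorem projection_mechanism_error {d s : ℕ} (hs : 1 ≤ s) (L : ℝ) (hL : 0 < L)
    (zbar ξ zhat : EuclideanSpace ℝ (Fin d))
    (hzbar : ∑ i, |zbar i| ≤ L * Real.sqrt s)
    (hzhat_mem : ∑ i, |zhat i| ≤ L * Real.sqrt s)
    (hzhat_min : ∀ z : EuclideanSpace ℝ (Fin d), (∑ i, |z i| ≤ L * Real.sqrt s) →
      ‖zhat - (zbar + ξ)‖ ≤ ‖z - (zbar + ξ)‖) :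
    ‖zhat - zbar‖ ≤ Real.sqrt (2 * L * (⨆ i, |ξ i|) * Real.sqrt s) := by
  set v : EuclideanSpace ℝ (Fin d) := zhat - zbar with hv
  set u : EuclideanSpace ℝ (Fin d) := zhat - (zbar + ξ) with hu
  -- Step 1: variational inequality ⟪u, v⟫ ≤ 0
  have hstep : ∀ t : ℝ, 0 < t → t ≤ 1 → ⟪u, v⟫ ≤ t * ‖v‖^2 / 2 := by
    intro t ht ht1
    have hfeas : ∑ i, |(zhat - t • v) i| ≤ L * Real.sqrt s := by
      have : ∀ i, |(zhat - t • v) i| ≤ (1 - t) * |zhat i| + t * |zbar i| := by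
        intro i
        have h1 : (zhat - t • v) i = (1 - t) * zhat i + t * zbar i := by
          simp [hv, PiLp.sub_apply, PiLp.smul_apply, smul_eq_mul]; ring
        rw [h1]
        calc |(1 - t) * zhat i + t * zbar i| ≤ |(1 - t) * zhat i| + |t * zbar i| :=
              abs_add_le _ _
          _ = (1 - t) * |zhat i| + t * |zbar i| := by
              rw [abs_mul, abs_mul, abs_of_nonneg (by linarith), abs_of_nonneg ht.le]
      calc ∑ i, |(zhat - t • v) i| ≤ ∑ i, ((1 - t) * |zhat i| + t * |zbar i|) :=
            Finset.sum_le_sum fun i _ => this i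
        _ = (1 - t) * ∑ i, |zhat i| + t * ∑ i, |zbar i| := by
            rw [Finset.sum_add_distrib, Finset.mul_sum, Finset.mul_sum]
        _ ≤ (1 - t) * (L * Real.sqrt s) + t * (L * Real.sqrt s) := by
            gcongr <;> linarith
        _ = L * Real.sqrt s := by ring
    have hmin := hzhat_min _ hfeas
    have heq : (zhat - t • v) - (zbar + ξ) = u - t • v := by
      simp [hu]; abel
    rw [heq] at hmin
    have hsq : ‖u‖^2 ≤ ‖u - t • v‖^2 := by
      have := hzhat_min _ hfeas
      rw [heq] at this
      nlinarith [norm_nonneg u, norm_nonneg (u - t • v)]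
    have hexp : ‖u - t • v‖^2 = ‖u‖^2 - 2 * (t * ⟪u, v⟫) + t^2 * ‖v‖^2 := by
      rw [norm_sub_sq_real, real_inner_smul_right, norm_smul]
      simp [abs_of_nonneg ht.le]
      ring
    nlinarith [hsq, hexp]
  have huv : ⟪u, v⟫ ≤ 0 := by
    by_contra h
    push_neg at h
    have hvpos : 0 < ‖v‖^2 := by
      rcases eq_or_lt_of_le (sq_nonneg ‖v‖) with h0 | h0
      · exfalso
        have : ‖v‖ = 0 := by nlinarith
        have hv0 : v = 0 := norm_eq_zero.mp this
        rw [hv0] at h; simp at h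
      · exact h0
    have ht := hstep (min 1 (⟪u, v⟫ / ‖v‖^2)) (by positivity) (min_le_left _ _)
    have hmin2 : min 1 (⟪u, v⟫ / ‖v‖^2) ≤ ⟪u, v⟫ / ‖v‖^2 := min_le_right _ _
    have : min 1 (⟪u, v⟫ / ‖v‖^2) * ‖v‖^2 ≤ ⟪u, v⟫ := by
      calc min 1 (⟪u, v⟫ / ‖v‖^2) * ‖v‖^2 ≤ (⟪u, v⟫ / ‖v‖^2) * ‖v‖^2 := by
            gcongr
        _ = ⟪u, v⟫ := by rw [div_mul_cancel₀ _ hvpos.ne']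
    have hmp : 0 < min 1 (⟪u, v⟫ / ‖v‖^2) := by positivity
    nlinarith
  -- Step 2: ‖v‖² ≤ ⟪v, ξ⟫
  have hvξ : v - u = ξ := by simp [hv, hu]
  have hsq : ‖v‖^2 ≤ ⟪v, ξ⟫ := by
    have h1 : ⟪v, ξ⟫ = ⟪v, v⟫ - ⟪v, u⟫ := by rw [← hvξ]; exact inner_sub_right v v u
    have h2 : ⟪v, u⟫ = ⟪u, v⟫ := (real_inner_comm u v)
    rw [← real_inner_self_eq_norm_sq]
    linarith
  -- Step 3: bound ⟪v, ξ⟫ by M * 2L√s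
  set M : ℝ := ⨆ i, |ξ i| with hM
  have hMξ : ∀ i, |ξ i| ≤ M := by
    intro i
    exact le_ciSup (f := fun i => |ξ i|) (Finite.bddAbove_range _) i
  have hM0 : 0 ≤ M := Real.iSup_nonneg fun i => abs_nonneg _
  have hbound : ⟪v, ξ⟫ ≤ M * (2 * (L * Real.sqrt s)) := by
    have h1 : ⟪v, ξ⟫ = ∑ i, v i * ξ i := by
      rw [PiLp.inner_apply]; simp [RCLike.inner_apply]; exact Finset.sum_congr rfl fun i _ => mul_comm _ _
    rw [h1]
    calc ∑ i, v i * ξ i ≤ ∑ i, |v i| * M := by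
          apply Finset.sum_le_sum
          intro i _
          calc v i * ξ i ≤ |v i * ξ i| := le_abs_self _
            _ = |v i| * |ξ i| := abs_mul _ _
            _ ≤ |v i| * M := by
                exact mul_le_mul_of_nonneg_left (hMξ i) (abs_nonneg _)
      _ = (∑ i, |v i|) * M := by rw [← Finset.sum_mul]
      _ ≤ (2 * (L * Real.sqrt s)) * M := by
          apply mul_le_mul_of_nonneg_right _ hM0
          calc ∑ i, |v i| ≤ ∑ i, (|zhat i| + |zbar i|) := by
                apply Finset.sum_le_sum
                intro i _
                have : v i = zhat i - zbar i := by simp [hv]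
                rw [this]; exact abs_sub _ _
            _ = ∑ i, |zhat i| + ∑ i, |zbar i| := Finset.sum_add_distrib
            _ ≤ 2 * (L * Real.sqrt s) := by linarith
      _ = M * (2 * (L * Real.sqrt s)) := by ring
  have hfin : ‖v‖^2 ≤ 2 * L * M * Real.sqrt s := by
    calc ‖v‖^2 ≤ ⟪v, ξ⟫ := hsq
      _ ≤ M * (2 * (L * Real.sqrt s)) := hbound
      _ = 2 * L * M * Real.sqrt s := by ring
  have := Real.sqrt_le_sqrt hfin
  rwa [Real.sqrt_sq (norm_nonneg v)] at this
end

section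
/- For all natural numbers s, d with 1 ≤ s ≤ d/2, there exists a subset P of the set C_s^d of s-sparse vectors in {0, 1/√s}^d such that |P| ≥ (d/s − 1/2)^{s/2} and for all distinct u, v ∈ P, ‖u − v‖₂ ≥ 1/√2. -/
open Finset

private lemma core_ineq (s x w : ℝ) (hs : 1 ≤ s) (hx : 0 ≤ x) (hw : 0 ≤ w) (hw2 : w ≤ s - 1) :
    (s+2*x)*(5*s+2*x)*(3*s+1-w)^2 ≤ 32*s^2*(2*s+x+1)*(s+2*x+1+w) := by
  nlinarith [mul_nonneg hx hw, mul_nonneg (mul_nonneg hx hx) hw, sq_nonneg (s-1), mul_nonneg hx (sub_nonneg.2 hs), mul_nonneg hw (sub_nonneg.2 hs), mul_nonneg (mul_nonneg hx hx) (sub_nonneg.2 hs), mul_nonneg (mul_nonneg hx hw) hw, mul_nonneg (mul_nonneg hw hw) (sub_nonneg.2 hw2), mul_nonneg hx (sub_nonneg.2 hw2), mul_nonneg (mul_nonneg hx hx) hx, sq_nonneg x, sq_nonneg w, mul_nonneg (mul_nonneg hx hx) (sub_nonneg.2 hw2)]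

private lemma pair_real (s d t j1 j2 : ℝ) (hs : 1 ≤ s) (hd : 2*s ≤ d) (ht : 0 ≤ t)
    (ht2 : 2*t ≤ s - 1) (hsum : j1 + j2 = s + t - 1) (hj1 : 0 ≤ j1) (hj2 : 0 ≤ j2) :
    (2*d - s)^2 * ((j1+1)*(j2+1)) ≤ 4*s^2 * ((d-j1)*(d-j2)) := by
  have core := core_ineq s (d - 2*s) (3*s - 3 - 2*(j1+j2)) hs (by linarith) (by linarith) (by linarith)
  have huv : (j1+1)*(j2+1) ≤ (j1+j2+2)^2/4 := by nlinarith [sq_nonneg (j1 - j2)]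
  have hA : (0:ℝ) ≤ (2*d-3*s)*(2*d+s) := mul_nonneg (by linarith) (by linarith)
  nlinarith [mul_le_mul_of_nonneg_left huv hA, core]

private lemma choose_mono_half {n a b : ℕ} (hab : a ≤ b) (hb : b ≤ n/2) :
    n.choose a ≤ n.choose b := by
  induction b, hab using Nat.le_induction with
  | base => exact le_refl _
  | succ b hab ih =>
      exact le_trans (ih (by omega)) (Nat.choose_le_succ_of_lt_half_left (by omega))

private lemma choose_prod (d t : ℕ) : ∀ m, t + m ≤ d →
    (d.choose (t+m) : ℝ) = (d.choose t) * ∏ i ∈ range m, (((d:ℝ) - (t+i))/((t:ℝ)+i+1)) := by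
  intro m
  induction m with
  | zero => simp
  | succ m ih =>
      intro hm
      have hm' : t + m ≤ d := by omega
      have hkey := Nat.choose_succ_right_eq d (t+m)
      have hden : ((t:ℝ)+m+1) ≠ 0 := by positivity
      have hcast : ((d - (t+m) : ℕ) : ℝ) = (d:ℝ) - (t+m) := by
        push_cast [Nat.cast_sub hm']; ring
      have : (d.choose (t+m+1) : ℝ) * ((t:ℝ)+m+1) = (d.choose (t+m) : ℝ) * ((d:ℝ) - (t+m)) := by
        have := congrArg (Nat.cast (R := ℝ)) hkey
        push_cast at this
        rw [← hcast]
        skip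
        linarith [this]
      rw [prod_range_succ, ← mul_assoc, ← ih hm', show t + (m+1) = (t+m)+1 from rfl]
      field_simp at this ⊢
      linarith [this]

private lemma ratio_bound (s d t : ℕ) (hs : 1 ≤ s) (hd : 2*s ≤ d) (ht2 : 2*t + 1 ≤ s) :
    ((d:ℝ)/s - 1/2) ^ ((s:ℝ)/2) * (d.choose t) ≤ (d.choose s) := by
  set m := s - t with hm_def
  have hm : t + m = s := by omega
  have hsd : s ≤ d := by omega
  have hs0 : (0:ℝ) < s := by exact_mod_cast hs
  set r : ℝ := (d:ℝ)/s - 1/2 with hr_def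
  have hr_eq : r = (2*(d:ℝ) - s) / (2*s) := by rw [hr_def]; field_simp
  have hds : (2*(s:ℝ)) ≤ d := by exact_mod_cast hd
  have hr1 : (1:ℝ) ≤ r := by
    rw [hr_eq, le_div_iff₀ (by positivity)]; linarith
  -- step 1 : rpow to pow
  have hsm : (s:ℝ)/2 ≤ (m:ℕ) := by
    have : (s:ℝ) ≤ 2*(m:ℕ) := by
      have : s ≤ 2*m := by omega
      exact_mod_cast this
    linarith
  have step1 : r ^ ((s:ℝ)/2) ≤ r ^ m := by
    calc r ^ ((s:ℝ)/2) ≤ r ^ ((m:ℕ):ℝ) := Real.rpow_le_rpow_of_exponent_le hr1 hsm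
    _ = r ^ m := Real.rpow_natCast r m
  -- step 2 : product lower bound
  set g : ℕ → ℝ := fun i => ((d:ℝ) - (t+i))/((t:ℝ)+i+1) with hg_def
  have hgpos : ∀ i ∈ range m, 0 < g i := by
    intro i hi
    rw [mem_range] at hi
    have h1 : (t:ℝ) + i + 1 ≤ s := by
      have : t + i + 1 ≤ s := by omega
      exact_mod_cast this
    apply div_pos (by linarith) (by positivity)
  have hpair : ∀ i ∈ range m, r^2 ≤ g i * g (m-1-i) := by
    intro i hi
    rw [mem_range] at hi
    have hi' : i ≤ m - 1 := by omega
    have hj2cast : ((m-1-i : ℕ) : ℝ) = (m:ℝ) - 1 - i := by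
      have h1 : ((m-1-i : ℕ) : ℝ) = ((m:ℕ):ℝ) - 1 - i := by
        push_cast [Nat.cast_sub (by omega : i ≤ m-1), Nat.cast_sub (by omega : 1 ≤ m)]
        ring
      exact h1
    set j1 : ℝ := (t:ℝ) + i with hj1_def
    set j2 : ℝ := (t:ℝ) + ((m-1-i : ℕ) : ℝ) with hj2_def
    have hmr : (m:ℝ) = (s:ℝ) - t := by
      have : (m:ℕ) = s - t := hm_def
      rw [this]; push_cast [Nat.cast_sub (by omega : t ≤ s)]; ring
    have hsum : j1 + j2 = (s:ℝ) + t - 1 := by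
      rw [hj1_def, hj2_def, hj2cast, hmr]; ring
    have hkey := pair_real (s:ℝ) (d:ℝ) (t:ℝ) j1 j2 (by exact_mod_cast hs) hds
      (by positivity) (by
        have : (2*t + 1 : ℝ) ≤ s := by exact_mod_cast ht2
        linarith) hsum (by positivity) (by positivity)
    have hj1s : j1 ≤ (s:ℝ) - 1 := by
      have : (t:ℝ) + i ≤ (s:ℝ) - 1 := by
        have : t + i + 1 ≤ s := by omega
        have h2 : ((t + i + 1 : ℕ):ℝ) ≤ s := by exact_mod_cast this
        push_cast at h2; linarith
      exact this
    have hj2s : j2 ≤ (s:ℝ) - 1 := by linarith [hsum, hj1_def, hj2_def, (by positivity : (0:ℝ) ≤ (t:ℝ)+(i:ℝ))]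
    have hg1 : g i = ((d:ℝ) - j1)/(j1 + 1) := by rw [hg_def, hj1_def]
    have hg2 : g (m-1-i) = ((d:ℝ) - j2)/(j2 + 1) := by
      rw [hg_def, hj2_def]
    rw [hg1, hg2, hr_eq, div_pow, div_mul_div_comm]
    rw [div_le_div_iff₀ (by positivity) (by positivity)]
    have hj1pos : (0:ℝ) ≤ j1 := by positivity
    have hj2pos : (0:ℝ) ≤ j2 := by rw [hj2_def]; positivity
    nlinarith [hkey]
  have hprodsq : (r^m)^2 ≤ (∏ i ∈ range m, g i)^2 := by
    have h1 : (∏ i ∈ range m, g i)^2 = ∏ i ∈ range m, (g i * g (m-1-i)) := by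
      rw [prod_mul_distrib, Finset.prod_range_reflect g m, sq]
    have h2 : (r^m)^2 = ∏ _i ∈ range m, r^2 := by
      rw [prod_const, card_range, ← pow_mul, ← pow_mul, mul_comm]
    rw [h1, h2]
    exact Finset.prod_le_prod (fun i _ => by positivity) hpair
  have hprodpos : 0 < ∏ i ∈ range m, g i := Finset.prod_pos hgpos
  have step2 : r^m ≤ ∏ i ∈ range m, g i :=
    le_of_pow_le_pow_left₀ (by norm_num) (le_of_lt hprodpos) hprodsq
  -- combine
  have hcp := choose_prod d t m (by omega)
  rw [hm] at hcp
  have hct : (0:ℝ) ≤ (d.choose t : ℝ) := by positivity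
  calc r ^ ((s:ℝ)/2) * (d.choose t) ≤ r^m * (d.choose t) :=
        mul_le_mul_of_nonneg_right step1 hct
    _ ≤ (∏ i ∈ range m, g i) * (d.choose t) := mul_le_mul_of_nonneg_right step2 hct
    _ = (d.choose s : ℝ) := by rw [hcp]; ring


private lemma ball_bound (s d K : ℕ) (hs : 1 ≤ s) (hd : 2*s ≤ d)
    (hK1 : ∀ k, 4*k < s → k ≤ K) (hK2 : 4*K + 1 ≤ s) (B : Finset (Fin d)) (hB : B.card = s) :
    ((Finset.powersetCard s (univ : Finset (Fin d))).filter
      (fun A => 4*(A\B).card < s)).card ≤ d.choose (2*K) := by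
  classical
  set S := Finset.powersetCard s (univ : Finset (Fin d)) with hS
  have hsub : (S.filter (fun A => 4*(A\B).card < s)) ⊆
      (range (K+1)).biUnion (fun k => S.filter (fun A => (B\A).card = k ∧ (A\B).card = k)) := by
    intro A hA
    rw [mem_filter] at hA
    obtain ⟨hA1, hA2⟩ := hA
    have hAs : A.card = s := Finset.mem_powersetCard_univ.1 hA1
    have hcomm : (B\A).card = (A\B).card := Finset.card_sdiff_comm (hB.trans hAs.symm)
    rw [mem_biUnion]
    exact ⟨(A\B).card, mem_range.2 (Nat.lt_succ_of_le (hK1 _ hA2)),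
      mem_filter.2 ⟨hA1, hcomm, rfl⟩⟩
  have hk_bound : ∀ k, (S.filter (fun A => (B\A).card = k ∧ (A\B).card = k)).card ≤
      s.choose k * (d-s).choose k := by
    intro k
    have hmaps : ∀ A ∈ S.filter (fun A => (B\A).card = k ∧ (A\B).card = k),
        (B\A, A\B) ∈ (Finset.powersetCard k B) ×ˢ (Finset.powersetCard k (univ \ B)) := by
      intro A hA
      rw [mem_filter] at hA
      rw [mem_product, Finset.mem_powersetCard, Finset.mem_powersetCard]
      refine ⟨⟨sdiff_subset, hA.2.1⟩, ⟨?_, hA.2.2⟩⟩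
      intro x hx
      rw [mem_sdiff] at hx ⊢
      exact ⟨mem_univ x, hx.2⟩
    have hinj : ∀ A1 ∈ S.filter (fun A => (B\A).card = k ∧ (A\B).card = k),
        ∀ A2 ∈ S.filter (fun A => (B\A).card = k ∧ (A\B).card = k),
        (B\A1, A1\B) = (B\A2, A2\B) → A1 = A2 := by
      intro A1 _ A2 _ heq
      rw [Prod.mk.injEq] at heq
      obtain ⟨h1, h2⟩ := heq
      ext i
      by_cases hiB : i ∈ B
      · have e1 : i ∈ B \ A1 ↔ i ∈ B \ A2 := by rw [h1]
        simp only [mem_sdiff, hiB, true_and] at e1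
        tauto
      · have e2 : i ∈ A1 \ B ↔ i ∈ A2 \ B := by rw [h2]
        simp only [mem_sdiff, hiB, not_false_iff, and_true] at e2
        exact e2
    calc (S.filter (fun A => (B\A).card = k ∧ (A\B).card = k)).card
        ≤ ((Finset.powersetCard k B) ×ˢ (Finset.powersetCard k (univ \ B))).card :=
          Finset.card_le_card_of_injOn _ hmaps hinj
      _ = s.choose k * (d-s).choose k := by
          rw [Finset.card_product, Finset.card_powersetCard, Finset.card_powersetCard, hB,
            Finset.card_sdiff_of_subset (Finset.subset_univ B), Finset.card_univ, Fintype.card_fin, hB]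
  calc (S.filter (fun A => 4*(A\B).card < s)).card
      ≤ ((range (K+1)).biUnion (fun k => S.filter
          (fun A => (B\A).card = k ∧ (A\B).card = k))).card := Finset.card_le_card hsub
    _ ≤ ∑ k ∈ range (K+1), (S.filter (fun A => (B\A).card = k ∧ (A\B).card = k)).card :=
          Finset.card_biUnion_le
    _ ≤ ∑ k ∈ range (K+1), s.choose k * (d-s).choose k :=
          Finset.sum_le_sum (fun k _ => hk_bound k)
    _ ≤ ∑ k ∈ range (K+1), s.choose k * (d-s).choose (2*K - k) := by
          refine Finset.sum_le_sum (fun k hk => ?_)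
          rw [mem_range] at hk
          refine Nat.mul_le_mul_left _ (choose_mono_half (by omega) ?_)
          omega
    _ ≤ ∑ k ∈ range (2*K+1), s.choose k * (d-s).choose (2*K - k) :=
          Finset.sum_le_sum_of_subset (by
            apply Finset.range_subset_range.2; omega)
    _ = d.choose (2*K) := by
          have h1 : d.choose (2*K) = ∑ k ∈ range (2*K+1), s.choose k * (d-s).choose (2*K-k) := by
            conv_lhs => rw [show d = s + (d-s) by omega]
            rw [Nat.add_choose_eq, Finset.Nat.sum_antidiagonal_eq_sum_range_succ_mk]
          rw [h1]

/-- Existence of a large packing of `s`-sparse vectors in `{0, 1/√s}^d`: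
for `1 ≤ s ≤ d/2` there is a set `P` of vectors with coordinates in `{0, 1/√s}`
and exactly `s` nonzero coordinates, with `|P| ≥ (d/s − 1/2)^(s/2)` and pairwise
ℓ₂-distance at least `1/√2`. -/
theorem sparse_packing_exists (s d : ℕ) (hs : 1 ≤ s) (hsd : 2 * s ≤ d) :
    ∃ P : Finset (Fin d → ℝ),
      (∀ u ∈ P, (∀ i, u i = 0 ∨ u i = 1 / Real.sqrt s) ∧
        (Finset.univ.filter fun i => u i ≠ 0).card = s) ∧
      ((d : ℝ) / s - 1 / 2) ^ ((s : ℝ) / 2) ≤ (P.card : ℝ) ∧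
      (∀ u ∈ P, ∀ v ∈ P, u ≠ v →
        1 / Real.sqrt 2 ≤ Real.sqrt (∑ i, (u i - v i) ^ 2)) := by
  classical
  set K : ℕ := (s+3)/4 - 1 with hK_def
  set t : ℕ := 2*K with ht_def
  have hK1 : ∀ k, 4*k < s → k ≤ K := by intro k hk; omega
  have hK2 : 4*K + 1 ≤ s := by omega
  set S : Finset (Finset (Fin d)) := Finset.powersetCard s (univ : Finset (Fin d)) with hS_def
  have hScard : S.card = d.choose s := by
    rw [hS_def, Finset.card_powersetCard, Finset.card_univ, Fintype.card_fin]
  -- greedy maximal family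
  set good : Finset (Finset (Fin d)) → Prop :=
    fun F => ∀ A ∈ F, ∀ B ∈ F, A ≠ B → s ≤ 4*(A\B).card with hgood_def
  set 𝒢 : Finset (Finset (Finset (Fin d))) := S.powerset.filter good with h𝒢_def
  have h𝒢ne : 𝒢.Nonempty := by
    refine ⟨∅, ?_⟩
    rw [h𝒢_def, mem_filter]
    exact ⟨Finset.mem_powerset.2 (Finset.empty_subset _), fun A hA => absurd hA (Finset.notMem_empty A)⟩
  obtain ⟨F, hF𝒢, hFmax⟩ := Finset.exists_max_image 𝒢 Finset.card h𝒢ne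
  rw [h𝒢_def, mem_filter, Finset.mem_powerset] at hF𝒢
  obtain ⟨hFS, hFgood⟩ := hF𝒢
  -- covering property
  have hcover : ∀ A ∈ S, ∃ B ∈ F, 4*(A\B).card < s := by
    intro A hA
    by_contra hcon
    push_neg at hcon
    have hAF : A ∉ F := by
      intro hAF
      have := hcon A hAF
      simp only [sdiff_self, Finset.bot_eq_empty, Finset.card_empty] at this
      omega
    have hins : insert A F ∈ 𝒢 := by
      rw [h𝒢_def, mem_filter, Finset.mem_powerset]
      constructor
      · exact Finset.insert_subset hA hFS
      · intro A1 hA1 A2 hA2 hne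
        have hcards : ∀ X ∈ S, X.card = s := fun X hX => Finset.mem_powersetCard_univ.1 hX
        have hsymm : ∀ X Y, X ∈ S → Y ∈ S → (X\Y).card = (Y\X).card := fun X Y hX hY =>
          Finset.card_sdiff_comm ((hcards X hX).trans (hcards Y hY).symm)
        rw [Finset.mem_insert] at hA1 hA2
        rcases hA1 with h1 | h1 <;> rcases hA2 with h2 | h2
        · exact absurd (h1.trans h2.symm) hne
        · rw [h1]; exact hcon A2 h2
        · rw [h2]
          have h := hcon A1 h1
          have h2' := hsymm A A1 hA (hFS h1)
          omega
        · exact hFgood A1 h1 A2 h2 hne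
    have := hFmax _ hins
    rw [Finset.card_insert_of_notMem hAF] at this
    omega
  -- counting
  have hcount : d.choose s ≤ F.card * d.choose t := by
    have hsubS : S ⊆ F.biUnion (fun B => S.filter (fun A => 4*(A\B).card < s)) := by
      intro A hA
      rw [Finset.mem_biUnion]
      obtain ⟨B, hB, hBlt⟩ := hcover A hA
      exact ⟨B, hB, mem_filter.2 ⟨hA, hBlt⟩⟩
    calc d.choose s = S.card := hScard.symm
      _ ≤ (F.biUnion (fun B => S.filter (fun A => 4*(A\B).card < s))).card :=
          Finset.card_le_card hsubS
      _ ≤ ∑ B ∈ F, (S.filter (fun A => 4*(A\B).card < s)).card := Finset.card_biUnion_le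
      _ ≤ ∑ _B ∈ F, d.choose t := by
          refine Finset.sum_le_sum (fun B hB => ?_)
          exact ball_bound s d K hs hsd hK1 hK2 B (Finset.mem_powersetCard_univ.1 (hFS hB))
      _ = F.card * d.choose t := by rw [Finset.sum_const, smul_eq_mul]
  -- cardinality lower bound for F
  have hRF : ((d : ℝ) / s - 1 / 2) ^ ((s : ℝ) / 2) ≤ (F.card : ℝ) := by
    have hratio := ratio_bound s d t hs hsd (by omega)
    have hctpos : (0:ℝ) < (d.choose t : ℝ) := by
      exact_mod_cast Nat.choose_pos (by omega : t ≤ d)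
    have hcount' : (d.choose s : ℝ) ≤ (F.card : ℝ) * (d.choose t : ℝ) := by
      exact_mod_cast hcount
    have := le_trans hratio hcount'
    exact le_of_mul_le_mul_right this hctpos
  -- geometry
  have hsqrt_pos : (0:ℝ) < Real.sqrt s := Real.sqrt_pos.2 (by exact_mod_cast hs)
  set c : ℝ := 1 / Real.sqrt s with hc_def
  have hc_ne : c ≠ 0 := by positivity
  have hc_sq : c^2 = 1/s := by
    rw [hc_def, div_pow, one_pow, Real.sq_sqrt (by positivity : (0:ℝ) ≤ (s:ℝ))]
  set vec : Finset (Fin d) → (Fin d → ℝ) := fun A i => if i ∈ A then c else 0 with hvec_def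
  have hvec_inj : Set.InjOn vec F := by
    intro A1 _ A2 _ heq
    ext i
    have := congrFun heq i
    simp only [hvec_def] at this
    by_cases h1 : i ∈ A1 <;> by_cases h2 : i ∈ A2 <;> simp [h1, h2] at this ⊢
    · exact hc_ne this
    · exact hc_ne this.symm
  refine ⟨F.image vec, ?_, ?_, ?_⟩
  · intro u hu
    rw [Finset.mem_image] at hu
    obtain ⟨A, hA, rfl⟩ := hu
    constructor
    · intro i
      by_cases h : i ∈ A <;> simp [hvec_def, h, hc_def]
    · have : (Finset.univ.filter fun i => vec A i ≠ 0) = A := by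
        ext i
        simp only [Finset.mem_filter, Finset.mem_univ, true_and, hvec_def]
        by_cases h : i ∈ A <;> simp [h, hc_ne]
      rw [this]
      exact Finset.mem_powersetCard_univ.1 (hFS hA)
  · rw [Finset.card_image_of_injOn hvec_inj]
    exact hRF
  · intro u hu v hv huv
    rw [Finset.mem_image] at hu hv
    obtain ⟨A, hA, rfl⟩ := hu
    obtain ⟨B, hB, rfl⟩ := hv
    have hAB : A ≠ B := fun h => huv (by rw [h])
    have hfar : s ≤ 4*(A\B).card := hFgood A hA B hB hAB
    have hcards : ∀ X ∈ S, X.card = s := fun X hX => Finset.mem_powersetCard_univ.1 hX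
    have hcomm : (B\A).card = (A\B).card :=
      Finset.card_sdiff_comm ((hcards B (hFS hB)).trans (hcards A (hFS hA)).symm)
    have hsum_eq : ∑ i, (vec A i - vec B i)^2 = ((2*(A\B).card : ℕ) : ℝ) * (1/s) := by
      have hptwise : ∀ i, (vec A i - vec B i)^2 = if i ∈ (A\B ∪ B\A) then (1:ℝ)/s else 0 := by
        intro i
        by_cases h1 : i ∈ A <;> by_cases h2 : i ∈ B <;>
          simp [hvec_def, h1, h2, Finset.mem_union, Finset.mem_sdiff, hc_sq] <;> ring_nf <;>
          simp [hc_sq]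
      rw [Finset.sum_congr rfl (fun i _ => hptwise i)]
      rw [Finset.sum_ite_mem, Finset.univ_inter, Finset.sum_const, nsmul_eq_mul]
      have hdisj : Disjoint (A\B) (B\A) := disjoint_sdiff_sdiff
      rw [Finset.card_union_of_disjoint hdisj, hcomm]
      push_cast
      ring
    have hhalf : (1:ℝ)/2 ≤ ∑ i, (vec A i - vec B i)^2 := by
      rw [hsum_eq]
      have hs0 : (0:ℝ) < s := by exact_mod_cast hs
      have hfar' : (s:ℝ) ≤ 4*((A\B).card : ℝ) := by exact_mod_cast hfar
      push_cast
      rw [mul_one_div, le_div_iff₀ hs0]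
      linarith
    calc 1 / Real.sqrt 2 = Real.sqrt (1/2) := by
          rw [one_div, one_div, Real.sqrt_inv]
      _ ≤ Real.sqrt (∑ i, (vec A i - vec B i)^2) := Real.sqrt_le_sqrt hhalf
end

section
/- Let f(·, z) be convex, L-Lipschitz, H-smooth on ℝ^d for each z, and let x_λ*(S) denote the unique minimizer over ℝ^d of F_S(x) + (λ/2)‖x‖², where F_S(x) = (1/n)Σᵢ f(x, zᵢ). Suppose each gradient ∇f(x, z) is s-sparse and that the ℓ₂-sensitivity bound ‖x_λ*(S) − x_λ*(S′)‖₂ ≤ 4L/(λn) holds for neighboring datasets S ≃ S′. Then the ℓ₁-sensitivity satisfies ‖x_λ*(S) − x_λ*(S′)‖₁ ≤ (2√(2s) L)/(λn) · (2H/λ + 1). -/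
open Finset

open InnerProductSpace


lemma l1_le_sqrt_card {d : ℕ} (v : EuclideanSpace ℝ (Fin d)) (k : ℕ)
    (hk : (Finset.univ.filter fun j => v j ≠ 0).card ≤ k) :
    ∑ j, |v j| ≤ Real.sqrt k * ‖v‖ := by
  classical
  set T := Finset.univ.filter fun j => v j ≠ 0 with hT
  have h1 : ∑ j, |v j| = ∑ j ∈ T, |v j| := by
    symm
    apply Finset.sum_subset (Finset.subset_univ T)
    intro j _ hj
    simp only [hT, Finset.mem_filter, Finset.mem_univ, true_and, not_not] at hj
    rw [hj, abs_zero]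
  have h2 : (∑ j ∈ T, |v j|) ^ 2 ≤ T.card * ∑ j ∈ T, |v j| ^ 2 :=
    sq_sum_le_card_mul_sum_sq
  have h3 : ∑ j ∈ T, |v j| ^ 2 ≤ ∑ j, |v j| ^ 2 :=
    Finset.sum_le_sum_of_subset_of_nonneg (Finset.subset_univ T) (by intros; positivity)
  have hnorm : ‖v‖ = Real.sqrt (∑ j, |v j| ^ 2) := by
    simp [EuclideanSpace.norm_eq, Real.norm_eq_abs, sq_abs]
  have h4 : (∑ j ∈ T, |v j|) ≤ Real.sqrt (k * ∑ j, |v j| ^ 2) := by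
    rw [← Real.sqrt_sq (by positivity : (0:ℝ) ≤ ∑ j ∈ T, |v j|)]
    apply Real.sqrt_le_sqrt
    calc (∑ j ∈ T, |v j|) ^ 2 ≤ T.card * ∑ j ∈ T, |v j| ^ 2 := h2
      _ ≤ k * ∑ j, |v j| ^ 2 := by
          apply mul_le_mul (by exact_mod_cast hk) h3 (by positivity) (by positivity)
  rw [h1, hnorm, ← Real.sqrt_mul (by positivity)]
  exact h4

lemma l1_sub_le {d s : ℕ} (u v : EuclideanSpace ℝ (Fin d))
    (hu : (Finset.univ.filter fun j => u j ≠ 0).card ≤ s)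
    (hv : (Finset.univ.filter fun j => v j ≠ 0).card ≤ s) :
    ∑ j, |u j - v j| ≤ Real.sqrt (2 * s) * ‖u - v‖ := by
  classical
  have happ : ∀ j, (u - v) j = u j - v j := fun j => rfl
  have hsupp : (Finset.univ.filter fun j => (u - v) j ≠ 0).card ≤ 2 * s := by
    have hsub : (Finset.univ.filter fun j => (u - v) j ≠ 0) ⊆
        (Finset.univ.filter fun j => u j ≠ 0) ∪ (Finset.univ.filter fun j => v j ≠ 0) := by
      intro j hj
      simp only [Finset.mem_filter, Finset.mem_univ, true_and, Finset.mem_union] at *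
      by_contra h
      push_neg at h
      obtain ⟨h1, h2⟩ := h
      exact hj (by rw [happ j, h1, h2, sub_zero])
    calc (Finset.univ.filter fun j => (u - v) j ≠ 0).card
        ≤ ((Finset.univ.filter fun j => u j ≠ 0) ∪
           (Finset.univ.filter fun j => v j ≠ 0)).card := Finset.card_le_card hsub
      _ ≤ (Finset.univ.filter fun j => u j ≠ 0).card +
          (Finset.univ.filter fun j => v j ≠ 0).card := Finset.card_union_le _ _
      _ ≤ 2 * s := by omega
  have := l1_le_sqrt_card (u - v) (2 * s) hsupp
  simpa [happ] using this

lemma grad_zero_of_min {d n : ℕ} (fs : Fin n → EuclideanSpace ℝ (Fin d) → ℝ)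
    (gs : Fin n → EuclideanSpace ℝ (Fin d)) (x : EuclideanSpace ℝ (Fin d))
    (hg : ∀ i, HasGradientAt (fs i) (gs i) x) (lam : ℝ)
    (hmin : ∀ y, (1/n:ℝ) * ∑ i, fs i x + lam/2*‖x‖^2 ≤ (1/n:ℝ)*∑ i, fs i y + lam/2*‖y‖^2) :
    (1/n:ℝ) • ∑ i, gs i + lam • x = 0 := by
  have hsum : HasFDerivAt (fun y => ∑ i, fs i y) (∑ i, toDual ℝ _ (gs i)) x :=
    HasFDerivAt.fun_sum (fun i _ => (hg i).hasFDerivAt)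
  have hc := hsum.const_mul ((1/n : ℝ))
  have hns : HasFDerivAt (fun y : EuclideanSpace ℝ (Fin d) => ‖y‖^2)
      (2 • (innerSL ℝ x)) x := (hasStrictFDerivAt_norm_sq x).hasFDerivAt
  have hns2 := hns.const_mul (lam/2)
  have htot := hc.add hns2
  have heq : (1/n : ℝ) • (∑ i, toDual ℝ _ (gs i)) + (lam/2) • (2 • (innerSL ℝ x))
      = toDual ℝ _ ((1/n:ℝ) • ∑ i, gs i + lam • x) := by
    ext y
    simp only [ContinuousLinearMap.add_apply, ContinuousLinearMap.smul_apply,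
      ContinuousLinearMap.sum_apply, toDual_apply_apply, innerSL_apply_apply,
      inner_add_left, inner_smul_left, inner_sum, smul_eq_mul, map_sum,
      RCLike.star_def, conj_trivial, sum_inner, nsmul_eq_mul]
    ring
  rw [heq] at htot
  have hlm : IsLocalMin (fun y => (1/n:ℝ)*∑ i, fs i y + lam/2*‖y‖^2) x :=
    Filter.Eventually.of_forall hmin
  have := hlm.hasFDerivAt_eq_zero htot
  exact (toDual ℝ (EuclideanSpace ℝ (Fin d))).map_eq_zero_iff.mp this

/-- ℓ₁-sensitivity of the regularized ERM minimizer under gradient sparsity: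
if each loss `f(·,z)` is convex, `L`-Lipschitz (gradients bounded by `L`), `H`-smooth,
with `s`-sparse gradients, `S ≃ S'` are neighboring datasets, `xS, xS'` minimize the
respective `λ`-regularized empirical risks, and the ℓ₂-sensitivity bound
`‖xS − xS'‖₂ ≤ 4L/(λn)` holds, then `‖xS − xS'‖₁ ≤ (2√(2s)L/(λn))(2H/λ + 1)`. -/
theorem regularized_erm_l1_sensitivity {d n : ℕ} (hn : 0 < n) {Z : Type*}
    (f : Z → EuclideanSpace ℝ (Fin d) → ℝ)
    (gradf : Z → EuclideanSpace ℝ (Fin d) → EuclideanSpace ℝ (Fin d))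
    (hgrad : ∀ z x, HasGradientAt (f z) (gradf z x) x)
    (hconv : ∀ z, ConvexOn ℝ Set.univ (f z))
    (L H lam : ℝ) (hL : 0 < L) (hH : 0 < H) (hlam : 0 < lam)
    (hLip : ∀ z x, ‖gradf z x‖ ≤ L)
    (hsmooth : ∀ z x y, ‖gradf z x - gradf z y‖ ≤ H * ‖x - y‖)
    (s : ℕ) (hs : 1 ≤ s)
    (hsparse : ∀ z x, (Finset.univ.filter fun j => gradf z x j ≠ 0).card ≤ s)
    (S S' : Fin n → Z) (hneighbor : ∃ i₀, ∀ i, i ≠ i₀ → S i = S' i)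
    (xS xS' : EuclideanSpace ℝ (Fin d))
    (hxS : ∀ y, (1 / n : ℝ) * ∑ i, f (S i) xS + lam / 2 * ‖xS‖ ^ 2 ≤
      (1 / n : ℝ) * ∑ i, f (S i) y + lam / 2 * ‖y‖ ^ 2)
    (hxS' : ∀ y, (1 / n : ℝ) * ∑ i, f (S' i) xS' + lam / 2 * ‖xS'‖ ^ 2 ≤
      (1 / n : ℝ) * ∑ i, f (S' i) y + lam / 2 * ‖y‖ ^ 2)
    (hsens : ‖xS - xS'‖ ≤ 4 * L / (lam * n)) :
    ∑ j, |xS j - xS' j| ≤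
      2 * Real.sqrt (2 * s) * L / (lam * n) * (2 * H / lam + 1) := by
  classical
  obtain ⟨i₀, hi₀⟩ := hneighbor
  have hnR : (0:ℝ) < n := by exact_mod_cast hn
  -- first-order optimality
  have h1 := grad_zero_of_min (fun i => f (S i)) (fun i => gradf (S i) xS) xS
    (fun i => hgrad (S i) xS) lam hxS
  have h2 := grad_zero_of_min (fun i => f (S' i)) (fun i => gradf (S' i) xS') xS'
    (fun i => hgrad (S' i) xS') lam hxS'
  have e1 : lam • xS = -((1/n:ℝ) • ∑ i, gradf (S i) xS) :=
    eq_neg_of_add_eq_zero_right h1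
  have e2 : lam • xS' = -((1/n:ℝ) • ∑ i, gradf (S' i) xS') :=
    eq_neg_of_add_eq_zero_right h2
  have hvec : lam • (xS - xS') =
      (1/n:ℝ) • ∑ i, (gradf (S' i) xS' - gradf (S i) xS) := by
    rw [Finset.sum_sub_distrib, smul_sub, smul_sub, e1, e2]
    abel
  -- coordinatewise identity
  have hcoord : ∀ j, lam * (xS j - xS' j) =
      (1/n:ℝ) * ∑ i, (gradf (S' i) xS' j - gradf (S i) xS j) := by
    intro j
    have := congrArg (EuclideanSpace.proj j) hvec
    simpa [map_sub, map_smul, map_sum, smul_eq_mul] using this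
  -- decomposition of the inner sum
  have hdecomp : ∀ j, ∑ i, (gradf (S' i) xS' j - gradf (S i) xS j) =
      (∑ i, (gradf (S i) xS' j - gradf (S i) xS j)) +
      (gradf (S' i₀) xS' j - gradf (S i₀) xS' j) := by
    intro j
    have : ∀ i, gradf (S' i) xS' j - gradf (S i) xS j =
        (gradf (S i) xS' j - gradf (S i) xS j) +
        (if i = i₀ then gradf (S' i₀) xS' j - gradf (S i₀) xS' j else 0) := by
      intro i
      by_cases hi : i = i₀
      · subst hi; rw [if_pos rfl]; ring
      · rw [hi₀ i hi, if_neg hi]; ring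
    rw [Finset.sum_congr rfl fun i _ => this i, Finset.sum_add_distrib,
      Finset.sum_ite_eq' univ i₀]
    simp
  -- l1 bounds on pieces
  have hA : ∀ i : Fin n, ∑ j, |gradf (S i) xS' j - gradf (S i) xS j| ≤
      Real.sqrt (2*s) * (H * (4 * L / (lam * n))) := by
    intro i
    calc ∑ j, |gradf (S i) xS' j - gradf (S i) xS j|
        ≤ Real.sqrt (2*s) * ‖gradf (S i) xS' - gradf (S i) xS‖ :=
          l1_sub_le _ _ (hsparse _ _) (hsparse _ _)
      _ ≤ Real.sqrt (2*s) * (H * (4 * L / (lam * n))) := by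
          apply mul_le_mul_of_nonneg_left _ (Real.sqrt_nonneg _)
          calc ‖gradf (S i) xS' - gradf (S i) xS‖ ≤ H * ‖xS' - xS‖ := hsmooth _ _ _
            _ ≤ H * (4 * L / (lam * n)) := by
                apply mul_le_mul_of_nonneg_left _ hH.le
                rw [norm_sub_rev]; exact hsens
  have hB : ∑ j, |gradf (S' i₀) xS' j - gradf (S i₀) xS' j| ≤
      Real.sqrt (2*s) * (2 * L) := by
    calc ∑ j, |gradf (S' i₀) xS' j - gradf (S i₀) xS' j|
        ≤ Real.sqrt (2*s) * ‖gradf (S' i₀) xS' - gradf (S i₀) xS'‖ :=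
          l1_sub_le _ _ (hsparse _ _) (hsparse _ _)
      _ ≤ Real.sqrt (2*s) * (2 * L) := by
          apply mul_le_mul_of_nonneg_left _ (Real.sqrt_nonneg _)
          calc ‖gradf (S' i₀) xS' - gradf (S i₀) xS'‖
              ≤ ‖gradf (S' i₀) xS'‖ + ‖gradf (S i₀) xS'‖ := norm_sub_le _ _
            _ ≤ L + L := add_le_add (hLip _ _) (hLip _ _)
            _ = 2 * L := by ring
  -- main bound
  have hmain : lam * ∑ j, |xS j - xS' j| ≤
      (1/n:ℝ) * (n * (Real.sqrt (2*s) * (H * (4 * L / (lam * n)))) +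
        Real.sqrt (2*s) * (2 * L)) := by
    have step1 : lam * ∑ j, |xS j - xS' j| = ∑ j, |lam * (xS j - xS' j)| := by
      rw [Finset.mul_sum]
      exact Finset.sum_congr rfl fun j _ => by
        rw [abs_mul, abs_of_pos hlam]
    rw [step1]
    calc ∑ j, |lam * (xS j - xS' j)|
        = ∑ j, |(1/n:ℝ) * ∑ i, (gradf (S' i) xS' j - gradf (S i) xS j)| :=
          Finset.sum_congr rfl fun j _ => by rw [hcoord j]
      _ = (1/n:ℝ) * ∑ j, |∑ i, (gradf (S' i) xS' j - gradf (S i) xS j)| := by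
          rw [Finset.mul_sum]
          exact Finset.sum_congr rfl fun j _ => by
            rw [abs_mul, abs_of_pos (by positivity : (0:ℝ) < 1/n)]
      _ ≤ (1/n:ℝ) * (n * (Real.sqrt (2*s) * (H * (4 * L / (lam * n)))) +
            Real.sqrt (2*s) * (2 * L)) := by
          apply mul_le_mul_of_nonneg_left _ (by positivity)
          calc ∑ j, |∑ i, (gradf (S' i) xS' j - gradf (S i) xS j)|
              ≤ ∑ j, ((∑ i, |gradf (S i) xS' j - gradf (S i) xS j|) +
                  |gradf (S' i₀) xS' j - gradf (S i₀) xS' j|) := by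
                apply Finset.sum_le_sum
                intro j _
                rw [hdecomp j]
                calc |_ + _| ≤ |∑ i, (gradf (S i) xS' j - gradf (S i) xS j)| +
                      |gradf (S' i₀) xS' j - gradf (S i₀) xS' j| := abs_add_le _ _
                  _ ≤ _ := add_le_add (Finset.abs_sum_le_sum_abs _ _) le_rfl
            _ = (∑ i, ∑ j, |gradf (S i) xS' j - gradf (S i) xS j|) +
                ∑ j, |gradf (S' i₀) xS' j - gradf (S i₀) xS' j| := by
                rw [Finset.sum_add_distrib, Finset.sum_comm]
            _ ≤ (∑ _i : Fin n, Real.sqrt (2*s) * (H * (4 * L / (lam * n)))) +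
                Real.sqrt (2*s) * (2 * L) :=
                add_le_add (Finset.sum_le_sum fun i _ => hA i) hB
            _ = n * (Real.sqrt (2*s) * (H * (4 * L / (lam * n)))) +
                Real.sqrt (2*s) * (2 * L) := by
                rw [Finset.sum_const, Finset.card_univ, Fintype.card_fin, nsmul_eq_mul]
  -- conclude by arithmetic
  have hfinal : (1/n:ℝ) * (n * (Real.sqrt (2*s) * (H * (4 * L / (lam * n)))) +
      Real.sqrt (2*s) * (2 * L)) =
      lam * (2 * Real.sqrt (2 * (s:ℝ)) * L / (lam * n) * (2 * H / lam + 1)) := by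
    field_simp
    ring
  have hcast : Real.sqrt (2 * (s:ℝ)) = Real.sqrt (2 * s) := by norm_num
  rw [hcast] at hfinal
  rw [hfinal] at hmain
  exact le_of_mul_le_mul_left hmain hlam
end

section
/- Let F_S : ℝ^d → ℝ be convex and differentiable with ‖∇F_S(x)‖₁ ≤ √(2s)·L for all x, let x* minimize F_S over a closed convex set X with ‖x*‖ ≤ D, let x_λ* minimize F_S(x) + (λ/2)‖x‖² over X, and let x̂, x̃ ∈ ℝ^d satisfy x̂ ∈ argmin_{x∈X} ‖x − x̃‖_∞ and ‖x̃ − x_λ*‖_∞ ≤ η. Then F_S(x̂) − F_S(x*) ≤ 2√(2s)·L·η + (λ/2)D². -/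
open Finset

/-- Utility of output perturbation with ℓ∞-projection: if `‖∇F_S‖₁ ≤ √(2s)L`,
`x*` minimizes `F_S` over `X` with `‖x*‖ ≤ D`, `x_λ*` minimizes the `λ`-regularized
objective over `X`, `x̂ ∈ argmin_{x ∈ X} ‖x − x̃‖_∞`, and `‖x̃ − x_λ*‖_∞ ≤ η`, then
`F_S(x̂) − F_S(x*) ≤ 2√(2s)Lη + (λ/2)D²`. -/
theorem output_perturbation_utility {d s : ℕ} (hs : 1 ≤ s)
    (L D lam η : ℝ) (hL : 0 < L) (hD : 0 < D) (hlam : 0 < lam) (hη : 0 ≤ η)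
    (F : EuclideanSpace ℝ (Fin d) → ℝ)
    (gradF : EuclideanSpace ℝ (Fin d) → EuclideanSpace ℝ (Fin d))
    (hconv : ∀ x y : EuclideanSpace ℝ (Fin d),
      F x + (inner ℝ (gradF x) (y - x) : ℝ) ≤ F y)
    (hgradl1 : ∀ x, ∑ j, |gradF x j| ≤ Real.sqrt (2 * s) * L)
    (X : Set (EuclideanSpace ℝ (Fin d))) (hXcl : IsClosed X) (hXconv : Convex ℝ X)
    (xstar : EuclideanSpace ℝ (Fin d)) (hxstarX : xstar ∈ X)
    (hxstarmin : ∀ y ∈ X, F xstar ≤ F y) (hxstarD : ‖xstar‖ ≤ D)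
    (xlam : EuclideanSpace ℝ (Fin d)) (hxlamX : xlam ∈ X)
    (hxlammin : ∀ y ∈ X, F xlam + lam / 2 * ‖xlam‖ ^ 2 ≤ F y + lam / 2 * ‖y‖ ^ 2)
    (xhat xtilde : EuclideanSpace ℝ (Fin d)) (hxhatX : xhat ∈ X)
    (hxhatmin : ∀ y ∈ X, (⨆ j, |xhat j - xtilde j|) ≤ ⨆ j, |y j - xtilde j|)
    (hnoise : (⨆ j, |xtilde j - xlam j|) ≤ η) :
    F xhat - F xstar ≤ 2 * Real.sqrt (2 * s) * L * η + lam / 2 * D ^ 2 := by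
  have hsqrt : 0 ≤ Real.sqrt (2 * s) * L := mul_nonneg (Real.sqrt_nonneg _) hL.le
  -- coordinatewise bound on x̂ - x_λ
  have hcoord : ∀ j : Fin d, |xhat j - xlam j| ≤ 2 * η := by
    intro j
    have hne : Nonempty (Fin d) := ⟨j⟩
    have h1 : (⨆ j', |xlam j' - xtilde j'|) ≤ η := by
      refine ciSup_le fun j' => ?_
      have := le_ciSup (Finite.bddAbove_range fun k => |xtilde k - xlam k|) j'
      rw [abs_sub_comm]
      exact this.trans hnoise
    have h2 : |xhat j - xtilde j| ≤ η := by
      calc |xhat j - xtilde j| ≤ ⨆ j', |xhat j' - xtilde j'| :=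
            le_ciSup (f := fun j' => |xhat j' - xtilde j'|) (Finite.bddAbove_range _) j
        _ ≤ ⨆ j', |xlam j' - xtilde j'| := hxhatmin xlam hxlamX
        _ ≤ η := h1
    have h3 : |xtilde j - xlam j| ≤ η := by
      have := le_ciSup (Finite.bddAbove_range fun k => |xtilde k - xlam k|) j
      exact this.trans hnoise
    calc |xhat j - xlam j| ≤ |xhat j - xtilde j| + |xtilde j - xlam j| :=
          abs_sub_le _ _ _
      _ ≤ 2 * η := by linarith
  -- step 1: F x̂ - F x_λ ≤ 2√(2s)Lη
  have step1 : F xhat - F xlam ≤ 2 * Real.sqrt (2 * s) * L * η := by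
    have hconv' := hconv xhat xlam
    have hinner : (inner ℝ (gradF xhat) (xhat - xlam) : ℝ)
        = ∑ j, gradF xhat j * (xhat j - xlam j) := by
      simp only [PiLp.inner_apply, RCLike.inner_apply, conj_trivial]
      exact Finset.sum_congr rfl fun j _ => by
        rw [PiLp.sub_apply]; ring
    have hbound : ∑ j, gradF xhat j * (xhat j - xlam j)
        ≤ Real.sqrt (2 * s) * L * (2 * η) := by
      calc ∑ j, gradF xhat j * (xhat j - xlam j)
          ≤ ∑ j, |gradF xhat j| * (2 * η) := by
            refine Finset.sum_le_sum fun j _ => ?_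
            calc gradF xhat j * (xhat j - xlam j)
                ≤ |gradF xhat j * (xhat j - xlam j)| := le_abs_self _
              _ = |gradF xhat j| * |xhat j - xlam j| := abs_mul _ _
              _ ≤ |gradF xhat j| * (2 * η) := by
                  exact mul_le_mul_of_nonneg_left (hcoord j) (abs_nonneg _)
        _ = (∑ j, |gradF xhat j|) * (2 * η) := by rw [← Finset.sum_mul]
        _ ≤ Real.sqrt (2 * s) * L * (2 * η) := by
            exact mul_le_mul_of_nonneg_right (hgradl1 xhat) (by linarith)
    have : F xhat - F xlam ≤ (inner ℝ (gradF xhat) (xhat - xlam) : ℝ) := by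
      have hneg : (inner ℝ (gradF xhat) (xlam - xhat) : ℝ)
          = - inner ℝ (gradF xhat) (xhat - xlam) := by
        rw [← inner_neg_right, neg_sub]
      linarith [hconv xhat xlam, hneg]
    calc F xhat - F xlam ≤ (inner ℝ (gradF xhat) (xhat - xlam) : ℝ) := this
      _ = ∑ j, gradF xhat j * (xhat j - xlam j) := hinner
      _ ≤ Real.sqrt (2 * s) * L * (2 * η) := hbound
      _ = 2 * Real.sqrt (2 * s) * L * η := by ring
  -- step 2: F x_λ - F x* ≤ λ/2 D²
  have step2 : F xlam - F xstar ≤ lam / 2 * D ^ 2 := by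
    have h := hxlammin xstar hxstarX
    have hDsq : ‖xstar‖ ^ 2 ≤ D ^ 2 := by
      have := norm_nonneg xstar
      nlinarith
    have hnn : 0 ≤ ‖xlam‖ ^ 2 := sq_nonneg _
    nlinarith
  linarith
end
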